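/- Let T be a t-norm that is general pseudo-homogeneous for F. If F is commutative (F(x,y)=F(y,x) for all x,y∈[0,1]), then T=min. -/
import Mathlib


open Set Filter Topology

def IsTnorm (T : ℝ → ℝ → ℝ) : Prop :=
  (∀ x ∈ Set.Icc (0:ℝ) 1, ∀ y ∈ Set.Icc (0:ℝ) 1, T x y ∈ Set.Icc (0:ℝ) 1) ∧
  (∀ x ∈ Set.Icc (0:ℝ) 1, ∀ y ∈ Set.Icc (0:ℝ) 1, T x y = T y x) ∧
  (∀ x ∈ Set.Icc (0:ℝ) 1, ∀ y ∈ Set.Icc (0:ℝ) 1, ∀ z ∈ Set.Icc (0:ℝ) 1,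
      T x (T y z) = T (T x y) z) ∧
  (∀ x ∈ Set.Icc (0:ℝ) 1, ∀ y ∈ Set.Icc (0:ℝ) 1, ∀ z ∈ Set.Icc (0:ℝ) 1,
      y ≤ z → T x y ≤ T x z) ∧
  (∀ x ∈ Set.Icc (0:ℝ) 1, T x 1 = x)

def IsGPH (T F : ℝ → ℝ → ℝ) : Prop :=
  ∀ lam ∈ Set.Icc (0:ℝ) 1, ∀ x ∈ Set.Icc (0:ℝ) 1, ∀ y ∈ Set.Icc (0:ℝ) 1,
    T (lam * x) (lam * y) = F lam (T x y)

noncomputable def TD : ℝ → ℝ → ℝ := fun x y => if max x y = 1 then min x y else 0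

theorem F_comm_implies_min (T F : ℝ → ℝ → ℝ) (hT : IsTnorm T) (h : IsGPH T F)
    (hcomm : ∀ x ∈ Set.Icc (0:ℝ) 1, ∀ y ∈ Set.Icc (0:ℝ) 1, F x y = F y x) :
    ∀ x ∈ Set.Icc (0:ℝ) 1, ∀ y ∈ Set.Icc (0:ℝ) 1, T x y = min x y := by
  obtain ⟨hrange, hsymm, hassoc, hmono, hone⟩ := hT
  have h1 : (1:ℝ) ∈ Set.Icc (0:ℝ) 1 := by constructor <;> norm_num
  have hF1 : ∀ μ ∈ Set.Icc (0:ℝ) 1, F 1 μ = μ := by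
    intro μ hμ
    have := h 1 h1 μ hμ 1 h1
    simp only [one_mul] at this
    rw [hone μ hμ] at this
    exact this.symm
  have hdiag : ∀ l ∈ Set.Icc (0:ℝ) 1, T l l = l := by
    intro l hl
    have := h l hl 1 h1 1 h1
    simp only [mul_one] at this
    rw [hone 1 h1, hcomm l hl 1 h1, hF1 l hl] at this
    exact this
  have key : ∀ x ∈ Set.Icc (0:ℝ) 1, ∀ y ∈ Set.Icc (0:ℝ) 1, x ≤ y → T x y = x := by
    intro x hx y hy hxy
    have hub : T x y ≤ x := by
      have := hmono x hx y hy 1 h1 hy.2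
      rwa [hone x hx] at this
    have hlb : x ≤ T x y := by
      have := hmono x hx x hx y hy hxy
      rwa [hdiag x hx] at this
    linarith
  intro x hx y hy
  rcases le_total x y with hxy | hyx
  · rw [key x hx y hy hxy, min_eq_left hxy]
  · rw [hsymm x hx y hy, key y hy x hx hyx, min_eq_right hyx]
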